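/- Let u : ℤ × ℝ × ℝ → ℝ, (n,x,y) ↦ u_n(x,y), with each u_n twice continuously differentiable, be a solution of the two-dimensional Toda lattice: for all n ∈ ℤ and (x,y) ∈ ℝ², ∂²u_n/∂x∂y = exp(u_{n-1} − u_n) − exp(u_n − u_{n+1}). Let H : ℝ → ℝ be twice continuously differentiable with H'(y) > 0 for all y. Then v_n(x,y) := u_n(x, H(y)) − n·log H'(y) is again a solution: ∂²v_n/∂x∂y = exp(v_{n-1} − v_n) − exp(v_n − v_{n+1}) for all n ∈ ℤ, (x,y) ∈ ℝ². -/

import Mathlib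

/-- The symmetry group generated by `Y(g) = g(y)∂_y + g'(y)n∂_{uₙ}` maps solutions of the
two-dimensional Toda lattice `u_{n,xy} = exp(uₙ₋₁ − uₙ) − exp(uₙ − uₙ₊₁)` to solutions:
if `uₙ(x,y)` is a solution and `H` is an increasing `C²` change of the variable `y`, then
`vₙ(x,y) = uₙ(x,H(y)) − n log H'(y)` is again a solution. -/
theorem toda2d_symmetry_Yg (u : ℤ → ℝ → ℝ → ℝ)
    (hu : ∀ n, ContDiff ℝ 2 (fun p : ℝ × ℝ => u n p.1 p.2))
    (hsol : ∀ (n : ℤ) (x y : ℝ),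
      deriv (fun s => deriv (fun r => u n s r) y) x =
        Real.exp (u (n - 1) x y - u n x y) - Real.exp (u n x y - u (n + 1) x y))
    (H : ℝ → ℝ) (hH : ContDiff ℝ 2 H) (hH' : ∀ y, 0 < deriv H y) :
    ∀ (n : ℤ) (x y : ℝ),
      let v : ℤ → ℝ → ℝ → ℝ := fun m s r => u m s (H r) - (m : ℝ) * Real.log (deriv H r)
      deriv (fun s => deriv (fun r => v n s r) y) x =
        Real.exp (v (n - 1) x y - v n x y) - Real.exp (v n x y - v (n + 1) x y) := by
  intro n x y v
  set F : ℝ × ℝ → ℝ := fun p => u n p.1 p.2 with hF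
  have hFc : ContDiff ℝ 2 F := hu n
  set G : ℝ × ℝ → ℝ := fun p => fderiv ℝ F p (0, 1) with hG
  -- the partial derivative in the second variable
  have hA : ∀ s r : ℝ, HasDerivAt (fun r' => u n s r') (G (s, r)) r := by
    intro s r
    have h1 : HasFDerivAt F (fderiv ℝ F (s, r)) (s, r) :=
      (hFc.differentiable two_ne_zero (s, r)).hasFDerivAt
    have h2 : HasDerivAt (fun r' : ℝ => ((s : ℝ), r')) ((0 : ℝ), (1 : ℝ)) r :=
      (hasDerivAt_const r s).prodMk (hasDerivAt_id r)
    exact h1.comp_hasDerivAt r h2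
  have hGc : ContDiff ℝ 1 G :=
    (hFc.fderiv_right (by norm_num)).clm_apply contDiff_const
  -- derivative of H and of deriv H
  have hHd : ∀ t : ℝ, HasDerivAt H (deriv H t) t :=
    fun t => (hH.differentiable two_ne_zero t).hasDerivAt
  have hH2 : ContDiff ℝ 1 (deriv H) := by
    have h : ContDiff ℝ ((1:ℕ) + 1) H := by norm_num; exact hH
    exact (contDiff_succ_iff_deriv.mp h).2.2
  have hHd2 : ∀ t : ℝ, HasDerivAt (deriv H) (deriv (deriv H) t) t :=
    fun t => (hH2.differentiable one_ne_zero t).hasDerivAt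
  set c := deriv H y with hc
  have hcpos : 0 < c := hH' y
  set D2 := deriv (deriv H) y with hD2
  -- inner derivative
  have hinner : ∀ s : ℝ, deriv (fun r => v n s r) y = G (s, H y) * c - (n : ℝ) * (D2 / c) := by
    intro s
    have h1 : HasDerivAt (fun r => u n s (H r)) (G (s, H y) * c) y :=
      (hA s (H y)).comp y (hHd y)
    have h2 : HasDerivAt (fun r => Real.log (deriv H r)) (D2 / c) y := by
      have := (Real.hasDerivAt_log hcpos.ne').comp y (hHd2 y)
      exact this.congr_deriv (by simp only [hc, hD2, div_eq_inv_mul])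
    have h3 : HasDerivAt (fun r => v n s r) (G (s, H y) * c - (n : ℝ) * (D2 / c)) y :=
      h1.sub (h2.const_mul (n : ℝ))
    exact h3.deriv
  -- the x-derivative of s ↦ ∂_y u n s (H y)
  have hGd : deriv (fun s => G (s, H y)) x =
      Real.exp (u (n - 1) x (H y) - u n x (H y)) -
        Real.exp (u n x (H y) - u (n + 1) x (H y)) := by
    have : (fun s => G (s, H y)) = fun s => deriv (fun r => u n s r) (H y) := by
      funext s; exact ((hA s (H y)).deriv).symm
    rw [this]
    exact hsol n x (H y)
  have hGdiff : DifferentiableAt ℝ (fun s => G (s, H y)) x := by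
    have : DifferentiableAt ℝ G (x, H y) := (hGc.differentiable one_ne_zero) (x, H y)
    exact this.comp (f := fun s : ℝ => (s, H y)) x ((differentiableAt_id).prodMk (differentiableAt_const _))
  -- outer derivative
  have houter : deriv (fun s => deriv (fun r => v n s r) y) x =
      deriv (fun s => G (s, H y)) x * c := by
    have h4 : (fun s => deriv (fun r => v n s r) y) =
        fun s => G (s, H y) * c - (n : ℝ) * (D2 / c) := funext hinner
    rw [h4]
    rw [deriv_fun_sub ((hGdiff.mul_const c)) (differentiableAt_const _)]
    simp [deriv_mul_const hGdiff]
  rw [houter, hGd]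
  -- algebra with exponentials
  have hv1 : v (n - 1) x y - v n x y = u (n - 1) x (H y) - u n x (H y) + Real.log c := by
    simp only [v]
    push_cast
    ring
  have hv2 : v n x y - v (n + 1) x y = u n x (H y) - u (n + 1) x (H y) + Real.log c := by
    simp only [v]
    push_cast
    ring
  rw [hv1, hv2, Real.exp_add, Real.exp_add, Real.exp_log hcpos]
  ring
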